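/- Let P = (P₀,P₁,P₂) be a probability vector on {0,1,2} with P₀ > 0 and P₂ > 0, set P* = (P₀/(P₀+P₂), 0, P₂/(P₀+P₂)), and let μ^Σ_P be the product probability measure on Σ whose factor at coordinate n ∈ ℤ is P for n ≥ 0 and P* for n < 0. Then for every admissible partition r, the push-forward μ_{r,P} := (J_r)_* μ^Σ_P is a probability measure on [0,1)² and is an eigenmeasure of the open baker B_r with decay rate P₀ + P₂. -/

import Mathlib

open MeasureTheory
open scoped ENNReal

/-- The two-sided shift on `Σ = {0,1,2}^ℤ`. -/
def shiftMap (ε : ℤ → Fin 3) : ℤ → Fin 3 := fun n => ε (n + 1)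

/-- The partition points `α₀ = 0`, `α₁ = r₀`, `α₂ = r₀ + r₁`. -/
def alphaOf (r : Fin 3 → ℝ) : Fin 3 → ℝ := ![0, r 0, r 0 + r 1]

/-- The closed baker's map `B̂_r` on the square `[0,1)²` (extended arbitrarily to `ℝ²`). -/
noncomputable def bakerMap (r : Fin 3 → ℝ) : ℝ × ℝ → ℝ × ℝ := fun x =>
  if x.1 < r 0 then (x.1 / r 0, r 0 * x.2)
  else if x.1 < r 0 + r 1 then ((x.1 - r 0) / r 1, r 1 * x.2 + r 0)
  else ((x.1 - (r 0 + r 1)) / r 2, r 2 * x.2 + (r 0 + r 1))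

/-- The coding map `J_r : Σ → [0,1]²`. -/
noncomputable def codingMap (r : Fin 3 → ℝ) (ε : ℤ → Fin 3) : ℝ × ℝ :=
  (∑' k : ℕ, (∏ i ∈ Finset.range k, r (ε (i : ℤ))) * alphaOf r (ε (k : ℤ)),
   ∑' k : ℕ, (∏ i ∈ Finset.range k, r (ε (-(i + 1) : ℤ))) * alphaOf r (ε (-(k + 1) : ℤ)))

/-- The unit square `[0,1) × [0,1)`. -/
def unitSquare : Set (ℝ × ℝ) := Set.Ico 0 1 ×ˢ Set.Ico 0 1

/-- The hole `H = [r₀, 1-r₂) × [0,1)` of the open baker's map. -/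
def bakerHole (r : Fin 3 → ℝ) : Set (ℝ × ℝ) := Set.Ico (r 0) (1 - r 2) ×ˢ Set.Ico 0 1

/-- `μ` is the product measure on `{0,1,2}^ℤ` with one-site weights `P n` at coordinate `n`. -/
def IsProductMeasure (μ : Measure (ℤ → Fin 3)) (P : ℤ → Fin 3 → ℝ) : Prop :=
  ∀ (s : Finset ℤ) (g : ℤ → Fin 3),
    μ {ε | ∀ i ∈ s, ε i = g i} = ∏ i ∈ s, ENNReal.ofReal (P i (g i))

def reflect (ε : ℤ → Fin 3) : ℤ → Fin 3 := fun n => ε (-(n + 1))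

noncomputable def Qfun (r : Fin 3 → ℝ) (ε : ℤ → Fin 3) : ℝ :=
  ∑' k : ℕ, (∏ i ∈ Finset.range k, r (ε (i : ℤ))) * alphaOf r (ε (k : ℤ))

section Q
variable {r : Fin 3 → ℝ}

lemma alpha_nonneg (hr : ∀ i, 0 < r i) (e : Fin 3) : 0 ≤ alphaOf r e := by
  fin_cases e <;> simp [alphaOf] <;> nlinarith [hr 0, hr 1]

lemma alpha_add_le (hr : ∀ i, 0 < r i) (hsum : r 0 + r 1 + r 2 = 1) (e : Fin 3) :
    alphaOf r e + r e ≤ 1 := by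
  fin_cases e <;> simp [alphaOf] <;> nlinarith [hr 0, hr 1, hr 2]

lemma alpha_add_lt (hr : ∀ i, 0 < r i) (hsum : r 0 + r 1 + r 2 = 1) {e : Fin 3} (he : e ≠ 2) :
    alphaOf r e + r e < 1 := by
  fin_cases e
  · simp [alphaOf]; nlinarith [hr 1, hr 2]
  · simp [alphaOf]; nlinarith [hr 2]
  · simp at he

lemma Qterm_nonneg (hr : ∀ i, 0 < r i) (ε : ℤ → Fin 3) (k : ℕ) :
    0 ≤ (∏ i ∈ Finset.range k, r (ε (i : ℤ))) * alphaOf r (ε (k : ℤ)) :=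
  mul_nonneg (Finset.prod_nonneg fun i _ => (hr _).le) (alpha_nonneg hr _)

lemma Qpartial_le (hr : ∀ i, 0 < r i) (hsum : r 0 + r 1 + r 2 = 1) (ε : ℤ → Fin 3) (n : ℕ) :
    ∑ k ∈ Finset.range n, (∏ i ∈ Finset.range k, r (ε (i : ℤ))) * alphaOf r (ε (k : ℤ))
      ≤ 1 - ∏ i ∈ Finset.range n, r (ε (i : ℤ)) := by
  induction n with
  | zero => simp
  | succ n ih =>
    rw [Finset.sum_range_succ, Finset.prod_range_succ]
    have hprod : 0 ≤ ∏ i ∈ Finset.range n, r (ε (i : ℤ)) :=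
      Finset.prod_nonneg fun i _ => (hr _).le
    have h1 := alpha_add_le hr hsum (ε (n : ℤ))
    nlinarith [hr (ε (n : ℤ))]

lemma Qsummable (hr : ∀ i, 0 < r i) (hsum : r 0 + r 1 + r 2 = 1) (ε : ℤ → Fin 3) :
    Summable (fun k : ℕ => (∏ i ∈ Finset.range k, r (ε (i : ℤ))) * alphaOf r (ε (k : ℤ))) :=
  summable_of_sum_range_le (Qterm_nonneg hr ε) (fun n => (Qpartial_le hr hsum ε n).trans
    (sub_le_self _ (Finset.prod_nonneg (fun (i : ℕ) _ => (hr (ε (i : ℤ))).le))))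

lemma Qfun_nonneg (hr : ∀ i, 0 < r i) (ε : ℤ → Fin 3) : 0 ≤ Qfun r ε :=
  tsum_nonneg (Qterm_nonneg hr ε)

lemma Qfun_le_one (hr : ∀ i, 0 < r i) (hsum : r 0 + r 1 + r 2 = 1) (ε : ℤ → Fin 3) :
    Qfun r ε ≤ 1 :=
  Real.tsum_le_of_sum_range_le (Qterm_nonneg hr ε) (fun n => (Qpartial_le hr hsum ε n).trans
    (sub_le_self _ (Finset.prod_nonneg (fun (i : ℕ) _ => (hr (ε (i : ℤ))).le))))

lemma Qfun_rec (hr : ∀ i, 0 < r i) (hsum : r 0 + r 1 + r 2 = 1) (ε : ℤ → Fin 3) :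
    Qfun r ε = alphaOf r (ε 0) + r (ε 0) * Qfun r (shiftMap ε) := by
  have hs := Qsummable hr hsum ε
  rw [Qfun, Summable.tsum_eq_zero_add hs]
  congr 1
  · simp
  · rw [Qfun, ← tsum_mul_left]
    congr 1; funext k
    rw [Finset.prod_range_succ']
    have h2 : ∀ i : ℕ, ε ((i : ℤ) + 1) = shiftMap ε (i : ℤ) := fun i => rfl
    push_cast
    simp only [h2]
    ring
end Q

section Q2
variable {r : Fin 3 → ℝ}

lemma Qfun_lt_one (hr : ∀ i, 0 < r i) (hsum : r 0 + r 1 + r 2 = 1) :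
    ∀ (m : ℕ) (ε : ℤ → Fin 3), ε (m : ℤ) ≠ 2 → Qfun r ε < 1 := by
  intro m
  induction m with
  | zero =>
    intro ε hm
    have hm0 : ε 0 ≠ 2 := by simpa using hm
    rw [Qfun_rec hr hsum ε]
    have h1 : Qfun r (shiftMap ε) ≤ 1 := Qfun_le_one hr hsum _
    have h0 : 0 ≤ Qfun r (shiftMap ε) := Qfun_nonneg hr _
    have h2 := alpha_add_lt hr hsum hm0
    nlinarith [hr (ε 0)]
  | succ m ih =>
    intro ε hm
    have hσ : shiftMap ε (m : ℤ) ≠ 2 := by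
      have : shiftMap ε (m : ℤ) = ε ((m + 1 : ℕ) : ℤ) := by
        simp [shiftMap]
      rw [this]; exact hm
    rw [Qfun_rec hr hsum ε]
    have h1 := ih (shiftMap ε) hσ
    have h2 := alpha_add_le hr hsum (ε 0)
    nlinarith [hr (ε 0), Qfun_nonneg hr (shiftMap ε), alpha_nonneg hr (ε 0)]

lemma Qfun_mem (hr : ∀ i, 0 < r i) (hsum : r 0 + r 1 + r 2 = 1) (ε : ℤ → Fin 3)
    (h : ∃ m : ℕ, ε ((m : ℤ) + 1) ≠ 2) :
    alphaOf r (ε 0) ≤ Qfun r ε ∧ Qfun r ε < alphaOf r (ε 0) + r (ε 0) := by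
  obtain ⟨m, hm⟩ := h
  have hσm : shiftMap ε (m : ℤ) ≠ 2 := hm
  have hσlt : Qfun r (shiftMap ε) < 1 := Qfun_lt_one hr hsum m _ hσm
  have hσge : 0 ≤ Qfun r (shiftMap ε) := Qfun_nonneg hr _
  rw [Qfun_rec hr hsum ε]
  constructor
  · nlinarith [hr (ε 0)]
  · nlinarith [hr (ε 0)]

lemma measurable_QtermSum (r : Fin 3 → ℝ) (n : ℕ) :
    Measurable (fun ε : ℤ → Fin 3 =>
      ∑ k ∈ Finset.range n, (∏ i ∈ Finset.range k, r (ε (i : ℤ))) * alphaOf r (ε (k : ℤ))) := by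
  apply Finset.measurable_sum
  intro k _
  apply Measurable.mul
  · apply Finset.measurable_prod
    intro i _
    exact (measurable_of_countable r).comp (measurable_pi_apply _)
  · exact (measurable_of_countable (alphaOf r)).comp (measurable_pi_apply _)

lemma measurable_Qfun (hr : ∀ i, 0 < r i) (hsum : r 0 + r 1 + r 2 = 1) :
    Measurable (Qfun r) := by
  apply measurable_of_tendsto_metrizable (measurable_QtermSum r)
  rw [tendsto_pi_nhds]
  intro ε
  exact (Qsummable hr hsum ε).hasSum.tendsto_sum_nat
end Q2

section Cyl
open Set

def elemCyl (s : Finset ℤ) (g : ℤ → Fin 3) : Set (ℤ → Fin 3) := {ε | ∀ i ∈ s, ε i = g i}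

lemma measurableSet_elemCyl (s : Finset ℤ) (g : ℤ → Fin 3) : MeasurableSet (elemCyl s g) := by
  have : elemCyl s g = ⋂ i ∈ (s : Set ℤ), (fun ε : ℤ → Fin 3 => ε i) ⁻¹' {g i} := by
    ext ε; simp [elemCyl]
  rw [this]
  exact MeasurableSet.biInter (s : Set ℤ).to_countable
    (fun i _ => (measurable_pi_apply i) (measurableSet_singleton _))

def resMap (s : Finset ℤ) : (ℤ → Fin 3) → ((i : s) → Fin 3) := s.restrict

lemma restrict_preimage_singleton (s : Finset ℤ) (y : (i : s) → Fin 3) :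
    (resMap s ⁻¹' {y} : Set (ℤ → Fin 3))
      = elemCyl s (fun i => if h : i ∈ s then y ⟨i, h⟩ else 0) := by
  ext ε
  simp only [Set.mem_preimage, Set.mem_singleton_iff, elemCyl, Set.mem_setOf_eq]
  constructor
  · rintro rfl i hi; simp [resMap, Finset.restrict, hi]
  · intro h
    funext i
    have := h i i.2
    simp only [i.2, dif_pos] at this
    simpa [resMap, Finset.restrict] using this

lemma measure_cylinder_eq (μ ν : Measure (ℤ → Fin 3))
    (h : ∀ s g, μ (elemCyl s g) = ν (elemCyl s g))
    (s : Finset ℤ) (S : Set ((i : s) → Fin 3)) :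
    μ (cylinder s S) = ν (cylinder s S) := by
  classical
  have hdecomp : cylinder s S = ⋃ y ∈ S.toFinite.toFinset, (resMap s ⁻¹' {y}) := by
    ext ε; simp [cylinder, resMap]
  have hdisj : (↑S.toFinite.toFinset : Set ((i : s) → Fin 3)).PairwiseDisjoint
      (fun y => (resMap s ⁻¹' {y} : Set (ℤ → Fin 3))) := by
    intro y _ z _ hyz
    apply Set.disjoint_left.mpr
    intro ε hy hz
    exact hyz (by rw [← hy.out, ← hz.out])
  have hmeas : ∀ y ∈ S.toFinite.toFinset,
      MeasurableSet (resMap s ⁻¹' {y} : Set (ℤ → Fin 3)) := by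
    intro y _
    rw [restrict_preimage_singleton]
    exact measurableSet_elemCyl _ _
  rw [hdecomp, measure_biUnion_finset hdisj hmeas, measure_biUnion_finset hdisj hmeas]
  apply Finset.sum_congr rfl
  intro y _
  rw [restrict_preimage_singleton]
  exact h _ _

lemma measure_ext_elemCyl (μ ν : Measure (ℤ → Fin 3)) [IsFiniteMeasure μ] [IsFiniteMeasure ν]
    (huniv : μ Set.univ = ν Set.univ)
    (h : ∀ s g, μ (elemCyl s g) = ν (elemCyl s g)) : μ = ν := by
  refine ext_of_generate_finite _ generateFrom_measurableCylinders.symm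
    isPiSystem_measurableCylinders ?_ huniv
  intro t ht
  obtain ⟨s, S, hS, rfl⟩ := (mem_measurableCylinders t).mp ht
  exact measure_cylinder_eq μ ν h s S
end Cyl

section Shift

lemma measurable_shiftMap : Measurable shiftMap :=
  measurable_pi_lambda _ (fun n => measurable_pi_apply (n + 1))

lemma measurableSet_ne_one (n : ℤ) : MeasurableSet {ε : ℤ → Fin 3 | ε n ≠ 1} :=
  ((measurable_pi_apply n) (measurableSet_singleton 1)).compl

theorem shift_eigen
    (P : Fin 3 → ℝ) (hP : ∀ i, 0 ≤ P i) (hPsum : P 0 + P 1 + P 2 = 1)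
    (hP0 : 0 < P 0) (hP2 : 0 < P 2)
    (Pstar : Fin 3 → ℝ)
    (hPstar : Pstar = fun i => if i = 1 then 0 else P i / (P 0 + P 2))
    (muS : Measure (ℤ → Fin 3)) [IsProbabilityMeasure muS]
    (hmuS : IsProductMeasure muS (fun n i => if 0 ≤ n then P i else Pstar i)) :
    (muS.map shiftMap).restrict {ε | ε (-1) ≠ 1} = (ENNReal.ofReal (P 0 + P 2)) • muS := by
  classical
  set w : ℤ → Fin 3 → ℝ := fun n i => if 0 ≤ n then P i else Pstar i with hw
  have hP02 : 0 < P 0 + P 2 := by linarith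
  have hmuE : ∀ (s : Finset ℤ) (g : ℤ → Fin 3),
      muS (elemCyl s g) = ∏ i ∈ s, ENNReal.ofReal (w i (g i)) := hmuS
  have hinj : Function.Injective (fun i : ℤ => i + 1) := fun a b h => by simpa using h
  -- finiteness of RHS
  haveI : IsFiniteMeasure ((ENNReal.ofReal (P 0 + P 2)) • muS) := by
    constructor
    rw [Measure.smul_apply, smul_eq_mul, measure_univ, mul_one]
    exact ENNReal.ofReal_lt_top
  haveI : IsFiniteMeasure ((muS.map shiftMap).restrict {ε | ε (-1) ≠ 1}) := by
    haveI : IsProbabilityMeasure (muS.map shiftMap) :=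
      Measure.isProbabilityMeasure_map measurable_shiftMap.aemeasurable
    infer_instance
  suffices key : ∀ (s : Finset ℤ) (g : ℤ → Fin 3),
      ((muS.map shiftMap).restrict {ε | ε (-1) ≠ 1}) (elemCyl s g)
        = (ENNReal.ofReal (P 0 + P 2) • muS) (elemCyl s g) by
    refine measure_ext_elemCyl _ _ ?_ key
    have huniv0 := key ∅ (fun _ => 0)
    simpa [elemCyl] using huniv0
  intro s g
  -- compute LHS as muS of a preimage
  have hcylm := measurableSet_elemCyl s g
  have hAm := measurableSet_ne_one (-1)
  rw [Measure.restrict_apply hcylm,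
    Measure.map_apply measurable_shiftMap (hcylm.inter hAm)]
  have hpre1 : shiftMap ⁻¹' (elemCyl s g) = elemCyl (s.image (· + 1)) (fun j => g (j - 1)) := by
    ext ε
    simp only [Set.mem_preimage, elemCyl, Set.mem_setOf_eq, shiftMap, Finset.mem_image]
    constructor
    · rintro h j ⟨i, hi, rfl⟩; simpa using h i hi
    · intro h i hi; simpa using h (i + 1) ⟨i, hi, rfl⟩
  have hpre2 : shiftMap ⁻¹' {ε : ℤ → Fin 3 | ε (-1) ≠ 1} = {ε : ℤ → Fin 3 | ε 0 ≠ 1} := by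
    ext ε; simp [shiftMap]
  rw [Set.preimage_inter, hpre1, hpre2]
  rw [Measure.smul_apply, smul_eq_mul, hmuE s g]
  set t := s.image (· + 1) with ht
  set g' : ℤ → Fin 3 := fun j => g (j - 1) with hg'
  by_cases hm : (-1 : ℤ) ∈ s
  · by_cases hg1 : g (-1) = 1
    · -- empty intersection, and RHS has a zero factor
      have hempty : elemCyl t g' ∩ {ε : ℤ → Fin 3 | ε 0 ≠ 1} = ∅ := by
        ext ε
        simp only [Set.mem_inter_iff, Set.mem_empty_iff_false, iff_false, not_and,
          elemCyl, Set.mem_setOf_eq]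
        intro h
        have h0 : ε 0 = g' 0 := h 0 (Finset.mem_image.mpr ⟨-1, hm, by ring⟩)
        simp only [hg', show (0:ℤ) - 1 = -1 by ring, hg1] at h0
        simp [h0]
      rw [hempty, measure_empty]
      have : ENNReal.ofReal (w (-1) (g (-1))) = 0 := by
        simp [hw, hg1, hPstar]
      rw [Finset.prod_eq_zero hm this, mul_zero]
    · -- cylinder already forces ε 0 ≠ 1
      have hsub : elemCyl t g' ∩ {ε : ℤ → Fin 3 | ε 0 ≠ 1} = elemCyl t g' := by
        apply Set.inter_eq_left.mpr
        intro ε hε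
        have h0 : ε 0 = g' 0 := hε 0 (Finset.mem_image.mpr ⟨-1, hm, by ring⟩)
        simp only [hg', show (0:ℤ) - 1 = -1 by ring] at h0
        simp [Set.mem_setOf_eq, h0, hg1]
      rw [hsub, hmuE t g', ht, Finset.prod_image (fun x _ y _ h => hinj h)]
      have hfac : ∀ i ∈ s, ENNReal.ofReal (w (i + 1) (g' (i + 1)))
          = (if i = -1 then ENNReal.ofReal (P 0 + P 2) else 1) * ENNReal.ofReal (w i (g i)) := by
        intro i hi
        have : g' (i + 1) = g i := by simp [hg']
        rw [this]
        by_cases hi1 : i = -1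
        · subst hi1
          rw [if_pos rfl]
          have hw1 : w (-1 + 1) (g (-1)) = P (g (-1)) := by norm_num [hw]
          have hw2 : w (-1) (g (-1)) = P (g (-1)) / (P 0 + P 2) := by
            norm_num [hw, hPstar, hg1]
          rw [hw1, hw2, ← ENNReal.ofReal_mul hP02.le, mul_div_cancel₀ _ (ne_of_gt hP02)]
        · simp only [if_neg hi1, one_mul, hw]
          rcases lt_or_ge i 0 with h0 | h0
          · have h1 : ¬ ((0:ℤ) ≤ i + 1) := by omega
            have h2 : ¬ ((0:ℤ) ≤ i) := by omega
            simp [h1, h2]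
          · have h1 : (0:ℤ) ≤ i + 1 := by omega
            simp [h0, h1]
      rw [Finset.prod_congr rfl hfac, Finset.prod_mul_distrib]
      congr 1
      rw [Finset.prod_ite_eq' s (-1) (fun _ => ENNReal.ofReal (P 0 + P 2)), if_pos hm]
  · -- -1 ∉ s : split on the value of ε 0
    have h0t : (0:ℤ) ∉ t := by
      simp only [ht, Finset.mem_image]
      rintro ⟨i, hi, hie⟩
      have : i = -1 := by omega
      exact hm (this ▸ hi)
    have hmem : ∀ (v : Fin 3) (ε : ℤ → Fin 3),
        ε ∈ elemCyl (insert 0 t) (Function.update g' 0 v)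
          ↔ ε 0 = v ∧ ε ∈ elemCyl t g' := by
      intro v ε
      simp only [elemCyl, Set.mem_setOf_eq, Finset.mem_insert]
      constructor
      · intro h
        refine ⟨by simpa using h 0 (Or.inl rfl), fun j hj => ?_⟩
        have hj0 : j ≠ 0 := fun hh => h0t (hh ▸ hj)
        simpa [Function.update_of_ne hj0] using h j (Or.inr hj)
      · rintro ⟨h0, h⟩ j hj
        rcases hj with rfl | hj
        · simpa using h0
        · have hj0 : j ≠ 0 := fun hh => h0t (hh ▸ hj)
          simpa [Function.update_of_ne hj0] using h j hj
    have hunion : elemCyl t g' ∩ {ε : ℤ → Fin 3 | ε 0 ≠ 1}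
        = elemCyl (insert 0 t) (Function.update g' 0 0)
          ∪ elemCyl (insert 0 t) (Function.update g' 0 2) := by
      ext ε
      have h3 : ∀ x : Fin 3, x ≠ 1 → x = 0 ∨ x = 2 := by decide
      have h3' : ∀ x : Fin 3, x = 0 ∨ x = 2 → x ≠ 1 := by decide
      simp only [Set.mem_inter_iff, Set.mem_union, hmem, Set.mem_setOf_eq]
      constructor
      · rintro ⟨hcyl, h1⟩
        rcases h3 _ h1 with h | h
        · exact Or.inl ⟨h, hcyl⟩
        · exact Or.inr ⟨h, hcyl⟩
      · rintro (⟨h0, hcyl⟩ | ⟨h0, hcyl⟩)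
        · exact ⟨hcyl, h3' _ (Or.inl h0)⟩
        · exact ⟨hcyl, h3' _ (Or.inr h0)⟩
    have hdisj : Disjoint (elemCyl (insert 0 t) (Function.update g' 0 0))
        (elemCyl (insert 0 t) (Function.update g' 0 2)) := by
      apply Set.disjoint_left.mpr
      intro ε h1 h2
      have e1 := ((hmem 0 ε).mp h1).1
      have e2 := ((hmem 2 ε).mp h2).1
      rw [e1] at e2
      exact absurd e2 (by decide)
    rw [hunion, measure_union hdisj (measurableSet_elemCyl _ _), hmuE, hmuE,
      Finset.prod_insert h0t, Finset.prod_insert h0t]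
    have hupd : ∀ v : Fin 3, ∀ j ∈ t,
        ENNReal.ofReal (w j (Function.update g' 0 v j)) = ENNReal.ofReal (w j (g' j)) := by
      intro v j hj
      have hj0 : j ≠ 0 := fun hh => h0t (hh ▸ hj)
      rw [Function.update_of_ne hj0]
    rw [Finset.prod_congr rfl (hupd 0), Finset.prod_congr rfl (hupd 2)]
    have hw00 : w 0 (Function.update g' 0 0 0) = P 0 := by simp [hw]
    have hw02 : w 0 (Function.update g' 0 2 0) = P 2 := by simp [hw]
    rw [hw00, hw02, ← add_mul, ← ENNReal.ofReal_add (hP 0) (hP 2)]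
    congr 1
    rw [ht, Finset.prod_image (fun x _ y _ h => hinj h)]
    apply Finset.prod_congr rfl
    intro i hi
    have hi1 : i ≠ -1 := fun hh => hm (hh ▸ hi)
    have hgg : g' (i + 1) = g i := by simp [hg']
    rw [hgg]
    rcases lt_or_ge i 0 with h0 | h0
    · have h1 : ¬ ((0:ℤ) ≤ i + 1) := by omega
      have h2 : ¬ ((0:ℤ) ≤ i) := by omega
      simp [hw, h1, h2]
    · have h1 : (0:ℤ) ≤ i + 1 := by omega
      simp [hw, h0, h1]
end Shift

section Conj
variable {r : Fin 3 → ℝ}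

lemma codingMap_eq2 (r : Fin 3 → ℝ) (ε : ℤ → Fin 3) :
    codingMap r ε = (Qfun r ε, Qfun r (reflect ε)) := rfl

lemma reflect_shift (ε : ℤ → Fin 3) : reflect (shiftMap ε) = fun n => ε (-n) := by
  funext n
  show ε (-(n + 1) + 1) = ε (-n)
  congr 1; ring

lemma shift_neg (ε : ℤ → Fin 3) : shiftMap (fun n => ε (-n)) = reflect ε := by
  funext n
  show ε (-(n + 1)) = ε (-(n + 1))
  rfl

lemma Pfun_shift (hr : ∀ i, 0 < r i) (hsum : r 0 + r 1 + r 2 = 1) (ε : ℤ → Fin 3) :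
    Qfun r (reflect (shiftMap ε)) = alphaOf r (ε 0) + r (ε 0) * Qfun r (reflect ε) := by
  rw [reflect_shift]
  have h := Qfun_rec hr hsum (fun n => ε (-n))
  rw [shift_neg] at h
  simpa using h

lemma baker_conj (hr : ∀ i, 0 < r i) (hsum : r 0 + r 1 + r 2 = 1) (ε : ℤ → Fin 3)
    (hplus : ∃ m : ℕ, ε ((m : ℤ) + 1) ≠ 2) :
    bakerMap r (codingMap r ε) = codingMap r (shiftMap ε) := by
  rw [codingMap_eq2, codingMap_eq2]
  have hrec := Qfun_rec hr hsum ε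
  have hPrec := Pfun_shift hr hsum ε
  obtain ⟨hlo, hhi⟩ := Qfun_mem hr hsum ε hplus
  have hr0 := hr 0; have hr1 := hr 1; have hr2 := hr 2
  obtain ⟨v, hv⟩ : ∃ v, ε 0 = v := ⟨_, rfl⟩
  rw [hv] at hrec hPrec hlo hhi
  have hv3 : ∀ x : Fin 3, x = 0 ∨ x = 1 ∨ x = 2 := by decide
  rcases hv3 v with rfl | rfl | rfl
  · simp [alphaOf] at hrec hPrec hlo hhi
    rw [bakerMap, if_pos (show (Qfun r ε, Qfun r (reflect ε)).1 < r 0 by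
      simpa using by linarith : _)]
    refine Prod.ext ?_ ?_
    · show Qfun r ε / r 0 = Qfun r (shiftMap ε)
      rw [hrec]; try field_simp
    · show r 0 * Qfun r (reflect ε) = Qfun r (reflect (shiftMap ε))
      rw [hPrec]; try ring
  · simp [alphaOf] at hrec hPrec hlo hhi
    rw [bakerMap, if_neg (show ¬ (Qfun r ε, Qfun r (reflect ε)).1 < r 0 by
      simpa using by linarith : _),
      if_pos (show (Qfun r ε, Qfun r (reflect ε)).1 < r 0 + r 1 by
      simpa using by linarith : _)]
    refine Prod.ext ?_ ?_
    · show (Qfun r ε - r 0) / r 1 = Qfun r (shiftMap ε)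
      rw [hrec]; field_simp; ring
    · show r 1 * Qfun r (reflect ε) + r 0 = Qfun r (reflect (shiftMap ε))
      rw [hPrec]; try ring
  · rw [show alphaOf r 2 = r 0 + r 1 from rfl] at hrec hPrec hlo hhi
    rw [bakerMap, if_neg (show ¬ (Qfun r ε, Qfun r (reflect ε)).1 < r 0 by
      simpa using by linarith : _),
      if_neg (show ¬ (Qfun r ε, Qfun r (reflect ε)).1 < r 0 + r 1 by
      simpa using by linarith : _)]
    refine Prod.ext ?_ ?_
    · show (Qfun r ε - (r 0 + r 1)) / r 2 = Qfun r (shiftMap ε)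
      rw [hrec]; field_simp; ring
    · show r 2 * Qfun r (reflect ε) + (r 0 + r 1) = Qfun r (reflect (shiftMap ε))
      rw [hPrec]; try ring

lemma mem_squareX (hr : ∀ i, 0 < r i) (hsum : r 0 + r 1 + r 2 = 1) (ε : ℤ → Fin 3)
    (hplus : ∃ m : ℕ, ε ((m : ℤ) + 1) ≠ 2) (hminus : ∃ m : ℕ, ε (-((m : ℤ) + 1)) ≠ 2) :
    codingMap r ε ∈ unitSquare := by
  rw [codingMap_eq2]
  obtain ⟨hlo, hhi⟩ := Qfun_mem hr hsum ε hplus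
  have h1 := alpha_add_le hr hsum (ε 0)
  obtain ⟨m, hm⟩ := hminus
  have hPlt : Qfun r (reflect ε) < 1 := Qfun_lt_one hr hsum m (reflect ε) hm
  simp only [unitSquare, Set.mem_prod, Set.mem_Ico]
  exact ⟨⟨le_trans (alpha_nonneg hr _) hlo, by linarith⟩, Qfun_nonneg hr _, hPlt⟩

lemma hole_iff (hr : ∀ i, 0 < r i) (hsum : r 0 + r 1 + r 2 = 1) (ε : ℤ → Fin 3)
    (hplus : ∃ m : ℕ, ε ((m : ℤ) + 1) ≠ 2) (hminus : ∃ m : ℕ, ε (-((m : ℤ) + 1)) ≠ 2) :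
    codingMap r ε ∈ bakerHole r ↔ ε 0 = 1 := by
  rw [codingMap_eq2]
  obtain ⟨hlo, hhi⟩ := Qfun_mem hr hsum ε hplus
  obtain ⟨m, hm⟩ := hminus
  have hPlt : Qfun r (reflect ε) < 1 := Qfun_lt_one hr hsum m (reflect ε) hm
  have hPge : 0 ≤ Qfun r (reflect ε) := Qfun_nonneg hr _
  have hr0 := hr 0; have hr1 := hr 1; have hr2 := hr 2
  have h12 : 1 - r 2 = r 0 + r 1 := by linarith
  simp only [bakerHole, Set.mem_prod, Set.mem_Ico]
  constructor
  · rintro ⟨⟨hq1, hq2⟩, -⟩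
    rw [h12] at hq2
    obtain ⟨v, hv⟩ : ∃ v, ε 0 = v := ⟨_, rfl⟩
    rw [hv] at hlo hhi ⊢
    have hv3 : ∀ x : Fin 3, x = 0 ∨ x = 1 ∨ x = 2 := by decide
    rcases hv3 v with rfl | rfl | rfl
    · simp [alphaOf] at hlo hhi
      exact absurd hq1 (not_le.mpr (by linarith))
    · rfl
    · rw [show alphaOf r 2 = r 0 + r 1 from rfl] at hlo hhi
      exact absurd hq2 (not_lt.mpr hlo)
  · intro hv
    rw [hv] at hlo hhi
    simp [alphaOf] at hlo hhi
    exact ⟨⟨hlo, by rw [h12]; linarith⟩, ⟨hPge, hPlt⟩⟩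
end Conj

section Null

def goodSet : Set (ℤ → Fin 3) :=
  {ε | (∃ k : ℕ, ε ((k : ℤ) + 1) ≠ 2) ∧ (∃ k : ℕ, ε (-((k : ℤ) + 1)) ≠ 2)}

lemma measurableSet_goodSet : MeasurableSet goodSet := by
  have h1 : ∀ j : ℤ, MeasurableSet {ε : ℤ → Fin 3 | ε j ≠ 2} :=
    fun j => ((measurable_pi_apply j) (measurableSet_singleton 2)).compl
  apply MeasurableSet.inter
  · show MeasurableSet {ε : ℤ → Fin 3 | ∃ k : ℕ, ε ((k : ℤ) + 1) ≠ 2}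
    have : {ε : ℤ → Fin 3 | ∃ k : ℕ, ε ((k : ℤ) + 1) ≠ 2}
        = ⋃ k : ℕ, {ε : ℤ → Fin 3 | ε ((k : ℤ) + 1) ≠ 2} := by
      ext ε; simp
    rw [this]; exact MeasurableSet.iUnion fun k => h1 _
  · show MeasurableSet {ε : ℤ → Fin 3 | ∃ k : ℕ, ε (-((k : ℤ) + 1)) ≠ 2}
    have : {ε : ℤ → Fin 3 | ∃ k : ℕ, ε (-((k : ℤ) + 1)) ≠ 2}
        = ⋃ k : ℕ, {ε : ℤ → Fin 3 | ε (-((k : ℤ) + 1)) ≠ 2} := by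
      ext ε; simp
    rw [this]; exact MeasurableSet.iUnion fun k => h1 _

lemma null_tail (muS : Measure (ℤ → Fin 3)) (w : ℤ → Fin 3 → ℝ)
    (hmuS : IsProductMeasure muS w)
    (j : ℕ → ℤ) (hjinj : Function.Injective j) (c : ℝ) (hc : c < 1)
    (hcw : ∀ k, w (j k) 2 = c) :
    muS {ε | ∀ k : ℕ, ε (j k) = 2} = 0 := by
  classical
  have hb : ∀ n : ℕ, muS {ε | ∀ k : ℕ, ε (j k) = 2} ≤ (ENNReal.ofReal c) ^ n := by
    intro n
    have hsub : {ε : ℤ → Fin 3 | ∀ k : ℕ, ε (j k) = 2}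
        ⊆ elemCyl ((Finset.range n).image j) (fun _ => 2) := by
      intro ε hε i hi
      obtain ⟨k, -, rfl⟩ := Finset.mem_image.mp hi
      exact hε k
    refine (measure_mono hsub).trans_eq ?_
    have := hmuS ((Finset.range n).image j) (fun _ => 2)
    rw [show elemCyl ((Finset.range n).image j) (fun _ => 2)
        = {ε : ℤ → Fin 3 | ∀ i ∈ (Finset.range n).image j, ε i = 2} from rfl, this,
      Finset.prod_image (fun x _ y _ h => hjinj h)]
    simp [hcw]
  have hlim : Filter.Tendsto (fun n : ℕ => (ENNReal.ofReal c) ^ n) Filter.atTop (nhds 0) :=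
    ENNReal.tendsto_pow_atTop_nhds_zero_of_lt_one (ENNReal.ofReal_lt_one.mpr hc)
  exact le_antisymm (ge_of_tendsto' hlim hb) (zero_le)

end Null

section Meas
lemma measurable_reflect : Measurable reflect :=
  measurable_pi_lambda _ (fun n => measurable_pi_apply _)

lemma measurable_codingMap {r : Fin 3 → ℝ} (hr : ∀ i, 0 < r i) (hsum : r 0 + r 1 + r 2 = 1) :
    Measurable (codingMap r) := by
  have hQ := measurable_Qfun hr hsum
  have h : codingMap r = fun ε => (Qfun r ε, Qfun r (reflect ε)) := funext (codingMap_eq2 r)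
  rw [h]
  exact hQ.prodMk (hQ.comp measurable_reflect)

lemma measurable_bakerMap (r : Fin 3 → ℝ) : Measurable (bakerMap r) := by
  unfold bakerMap
  apply Measurable.ite
  · exact measurableSet_lt measurable_fst measurable_const
  · exact (measurable_fst.div_const _).prodMk (measurable_snd.const_mul _)
  apply Measurable.ite
  · exact measurableSet_lt measurable_fst measurable_const
  · exact ((measurable_fst.sub_const _).div_const _).prodMk
      ((measurable_snd.const_mul _).add_const _)
  · exact ((measurable_fst.sub_const _).div_const _).prodMk
      ((measurable_snd.const_mul _).add_const _)

lemma measurableSet_unitSquare : MeasurableSet unitSquare :=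
  measurableSet_Ico.prod measurableSet_Ico

lemma measurableSet_bakerHole (r : Fin 3 → ℝ) : MeasurableSet (bakerHole r) :=
  measurableSet_Ico.prod measurableSet_Ico
end Meas

/-- For a probability vector `P` with `P₀ > 0` and `P₂ > 0`, and
`P* = (P₀/(P₀+P₂), 0, P₂/(P₀+P₂))`, the push-forward under `J_r` of the product measure
with factor `P` at coordinates `n ≥ 0` and `P*` at coordinates `n < 0` is, for every
admissible partition `r`, a probability measure on `[0,1)²` and an eigenmeasure of the
open baker `B_r` with decay rate `P₀ + P₂`. -/
theorem bernoulli_pushforward_eigenmeasure_of_baker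
    (P : Fin 3 → ℝ) (hP : ∀ i, 0 ≤ P i) (hPsum : P 0 + P 1 + P 2 = 1)
    (hP0 : 0 < P 0) (hP2 : 0 < P 2)
    (Pstar : Fin 3 → ℝ)
    (hPstar : Pstar = fun i => if i = 1 then 0 else P i / (P 0 + P 2))
    (muS : Measure (ℤ → Fin 3)) [IsProbabilityMeasure muS]
    (hmuS : IsProductMeasure muS (fun n i => if 0 ≤ n then P i else Pstar i))
    (r : Fin 3 → ℝ) (hr : ∀ i, 0 < r i) (hsum : r 0 + r 1 + r 2 = 1) :
    IsProbabilityMeasure (muS.map (codingMap r)) ∧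
    (muS.map (codingMap r)) unitSquare = 1 ∧
    ∀ S : Set (ℝ × ℝ), MeasurableSet S →
      (muS.map (codingMap r)) (bakerMap r ⁻¹' S ∩ (unitSquare \ bakerHole r))
        = ENNReal.ofReal (P 0 + P 2) * (muS.map (codingMap r)) S := by
  classical
  have hJmeas : Measurable (codingMap r) := measurable_codingMap hr hsum
  haveI : IsProbabilityMeasure (muS.map (codingMap r)) :=
    Measure.isProbabilityMeasure_map hJmeas.aemeasurable
  have hP02 : 0 < P 0 + P 2 := by linarith
  have hP2lt : P 2 < 1 := by linarith [hP 1]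
  have hPs2lt : Pstar 2 < 1 := by
    rw [hPstar]
    simp only [show (2 : Fin 3) ≠ 1 by decide, if_neg, if_false]
    rw [div_lt_one hP02]; linarith
  -- null complement of goodSet
  have hNplus : muS {ε | ∀ k : ℕ, ε ((k : ℤ) + 1) = 2} = 0 := by
    refine null_tail muS _ hmuS (fun k : ℕ => (k : ℤ) + 1)
      (fun a b h => by simpa using h) (P 2) hP2lt (fun k => ?_)
    simp only [show (0:ℤ) ≤ (k : ℤ) + 1 by positivity, if_pos]
  have hNminus : muS {ε | ∀ k : ℕ, ε (-((k : ℤ) + 1)) = 2} = 0 := by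
    refine null_tail muS _ hmuS (fun k : ℕ => -((k : ℤ) + 1))
      (fun a b h => by simpa using h) (Pstar 2) hPs2lt (fun k => ?_)
    simp only [show ¬ ((0:ℤ) ≤ -((k : ℤ) + 1)) by omega, if_neg, if_false]
  have hGc : muS goodSetᶜ = 0 := by
    have hsub : goodSetᶜ ⊆ {ε : ℤ → Fin 3 | ∀ k : ℕ, ε ((k : ℤ) + 1) = 2}
        ∪ {ε : ℤ → Fin 3 | ∀ k : ℕ, ε (-((k : ℤ) + 1)) = 2} := by
      intro ε hε
      simp only [goodSet, Set.mem_compl_iff, Set.mem_setOf_eq, not_and_or, not_exists,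
        not_not] at hε
      rcases hε with h | h
      · exact Or.inl h
      · exact Or.inr h
    refine le_antisymm ((measure_mono hsub).trans ((measure_union_le _ _).trans ?_)) (zero_le)
    rw [hNplus, hNminus]; simp
  refine ⟨inferInstance, ?_, ?_⟩
  · -- unit square has measure 1
    rw [Measure.map_apply hJmeas measurableSet_unitSquare]
    refine le_antisymm prob_le_one ?_
    have hsub : goodSet ⊆ codingMap r ⁻¹' unitSquare := by
      rintro ε ⟨hplus, hminus⟩
      exact mem_squareX hr hsum ε hplus hminus
    calc (1 : ℝ≥0∞) = muS Set.univ := (measure_univ).symm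
    _ = muS (Set.univ ∩ goodSet) := (measure_inter_conull hGc).symm
    _ ≤ muS (codingMap r ⁻¹' unitSquare) := measure_mono (by
        rw [Set.univ_inter]; exact hsub)
  · intro S hS
    have hXmeas : MeasurableSet (bakerMap r ⁻¹' S ∩ (unitSquare \ bakerHole r)) :=
      ((measurable_bakerMap r) hS).inter
        (measurableSet_unitSquare.diff (measurableSet_bakerHole r))
    rw [Measure.map_apply hJmeas hXmeas, Measure.map_apply hJmeas hS]
    have hkey : codingMap r ⁻¹' (bakerMap r ⁻¹' S ∩ (unitSquare \ bakerHole r)) ∩ goodSet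
        = (shiftMap ⁻¹' (codingMap r ⁻¹' S ∩ {ε : ℤ → Fin 3 | ε (-1) ≠ 1})) ∩ goodSet := by
      ext ε
      simp only [Set.mem_inter_iff, Set.mem_preimage, Set.mem_diff, Set.mem_setOf_eq]
      refine and_congr_left (fun hG => ?_)
      obtain ⟨hplus, hminus⟩ := hG
      have hconj := baker_conj hr hsum ε hplus
      have hsq := mem_squareX hr hsum ε hplus hminus
      have hhole := hole_iff hr hsum ε hplus hminus
      have hsh : shiftMap ε (-1) = ε 0 := by show ε (-1 + 1) = ε 0; norm_num
      constructor
      · rintro ⟨hBS, -, hnh⟩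
        refine ⟨?_, ?_⟩
        · show codingMap r (shiftMap ε) ∈ S
          rw [← hconj]; exact hBS
        · rw [hsh]
          intro h1; exact hnh (hhole.mpr h1)
      · rintro ⟨hS', h1⟩
        rw [hsh] at h1
        refine ⟨?_, hsq, fun hh => h1 (hhole.mp hh)⟩
        show bakerMap r (codingMap r ε) ∈ S
        rw [hconj]; exact hS'
    calc muS (codingMap r ⁻¹' (bakerMap r ⁻¹' S ∩ (unitSquare \ bakerHole r)))
        = muS (codingMap r ⁻¹' (bakerMap r ⁻¹' S ∩ (unitSquare \ bakerHole r)) ∩ goodSet) :=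
          (measure_inter_conull hGc).symm
    _ = muS ((shiftMap ⁻¹' (codingMap r ⁻¹' S ∩ {ε : ℤ → Fin 3 | ε (-1) ≠ 1})) ∩ goodSet) := by
          rw [hkey]
    _ = muS (shiftMap ⁻¹' (codingMap r ⁻¹' S ∩ {ε : ℤ → Fin 3 | ε (-1) ≠ 1})) :=
          measure_inter_conull hGc
    _ = (muS.map shiftMap) (codingMap r ⁻¹' S ∩ {ε : ℤ → Fin 3 | ε (-1) ≠ 1}) :=
          (Measure.map_apply measurable_shiftMap ((hJmeas hS).inter (measurableSet_ne_one (-1)))).symm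
    _ = ((muS.map shiftMap).restrict {ε : ℤ → Fin 3 | ε (-1) ≠ 1}) (codingMap r ⁻¹' S) :=
          (Measure.restrict_apply (hJmeas hS)).symm
    _ = (ENNReal.ofReal (P 0 + P 2) • muS) (codingMap r ⁻¹' S) := by
          rw [shift_eigen P hP hPsum hP0 hP2 Pstar hPstar muS hmuS]
    _ = ENNReal.ofReal (P 0 + P 2) * muS (codingMap r ⁻¹' S) := by
          rw [Measure.smul_apply, smul_eq_mul]
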